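/- The entropy of the stationary representation of the absorbed chain equals h(𝕐^{(𝒜)}) = -(1-γ) ∑_{j∈I} μ(j) log μ(j) - ∑_{i,j∈I} μ(i) P(i,j) log P(i,j) - ∑_{i∈I, δ∈ℰ} μ(i) P(i,δ) log P(i,δ). -/
import Mathlib


open Finset Matrix Real

/-- The entropy of the stationary representation of the absorbed chain equals
h(𝕐^{(𝒜)}) = -(1-γ)∑_j μ(j)log μ(j) - ∑_{i,j∈I} μ(i)P(i,j)log P(i,j)
- ∑_{i∈I,δ∈ℰ} μ(i)P(i,δ)log P(i,δ), with 0 log 0 = 0 (via negMulLog). -/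
theorem absorbed_entropy_formula {I E : Type*} [Fintype I] [Fintype E]
    [DecidableEq I] [DecidableEq E] [Nonempty I] [Nonempty E]
    (P : Matrix (I ⊕ E) (I ⊕ E) ℝ)
    (hP0 : ∀ a b, 0 ≤ P a b)
    (hP1 : ∀ a, ∑ b, P a b = 1)
    (habs : ∀ (ε : E) (b : I ⊕ E), P (Sum.inr ε) b = if b = Sum.inr ε then 1 else 0)
    (hirr : ∀ i j : I, ∃ n : ℕ, 0 < ((P.submatrix Sum.inl Sum.inl) ^ n) i j)
    (hsub : 0 < ∑ i : I, ∑ ε : E, P (Sum.inl i) (Sum.inr ε))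
    (μ : I → ℝ) (hμ0 : ∀ i, 0 ≤ μ i) (hμ1 : ∑ i, μ i = 1)
    (γ : ℝ) (hγdef : γ = ∑ i : I, ∑ j : I, μ i * P (Sum.inl i) (Sum.inl j))
    (hγ : 0 < γ ∧ γ < 1)
    (hqsd : μ ᵥ* (P.submatrix Sum.inl Sum.inl) = γ • μ)
    (A : I × I × Option E → I × I × Option E → ℝ)
    (hA : ∀ (i j l k : I) (d e : Option E),
      A (i, j, d) (l, k, e)
        = if l = j then
            (match e with
              | none => P (Sum.inl j) (Sum.inl k)
              | some ε => P (Sum.inl j) (Sum.inr ε) * μ k)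
          else 0)
    (η : I × I × Option E → ℝ)
    (hη : ∀ (i j : I) (d : Option E),
      η (i, j, d)
        = match d with
          | none => μ i * P (Sum.inl i) (Sum.inl j)
          | some δ => μ i * P (Sum.inl i) (Sum.inr δ) * μ j) :
    (∑ x : I × I × Option E, η x * ∑ y : I × I × Option E, negMulLog (A x y))
      = (1 - γ) * (∑ j : I, negMulLog (μ j))
        + (∑ i : I, ∑ j : I, μ i * negMulLog (P (Sum.inl i) (Sum.inl j)))
        + ∑ i : I, ∑ δ : E, μ i * negMulLog (P (Sum.inl i) (Sum.inr δ)) := by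
  classical
  set Hμ : ℝ := ∑ j : I, negMulLog (μ j) with hHμ
  -- the inner sum depends only on the second coordinate
  set S : I → ℝ := fun j =>
    (∑ k : I, negMulLog (P (Sum.inl j) (Sum.inl k)))
      + ((∑ ε : E, negMulLog (P (Sum.inl j) (Sum.inr ε)))
        + (∑ ε : E, P (Sum.inl j) (Sum.inr ε)) * Hμ) with hS
  have key : ∀ (i j : I) (d : Option E),
      (∑ y : I × I × Option E, negMulLog (A (i, j, d) y)) = S j := by
    intro i j d
    rw [Fintype.sum_prod_type]
    rw [Finset.sum_eq_single j]
    · rw [Fintype.sum_prod_type]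
      have : ∀ k : I, (∑ e : Option E, negMulLog (A (i, j, d) (j, k, e)))
          = negMulLog (P (Sum.inl j) (Sum.inl k))
            + ∑ ε : E, (μ k * negMulLog (P (Sum.inl j) (Sum.inr ε))
              + P (Sum.inl j) (Sum.inr ε) * negMulLog (μ k)) := by
        intro k
        rw [Fintype.sum_option]
        simp only [hA, if_pos rfl]
        congr 1
        exact Finset.sum_congr rfl fun ε _ => negMulLog_mul _ _
      rw [Finset.sum_congr rfl fun k _ => this k]
      rw [Finset.sum_add_distrib, hS]
      congr 1
      have expand : ∀ k : I,
          (∑ ε : E, (μ k * negMulLog (P (Sum.inl j) (Sum.inr ε))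
            + P (Sum.inl j) (Sum.inr ε) * negMulLog (μ k)))
          = μ k * (∑ ε : E, negMulLog (P (Sum.inl j) (Sum.inr ε)))
            + (∑ ε : E, P (Sum.inl j) (Sum.inr ε)) * negMulLog (μ k) := by
        intro k
        rw [Finset.sum_add_distrib, Finset.mul_sum, Finset.sum_mul]
      rw [Finset.sum_congr rfl fun k _ => expand k, Finset.sum_add_distrib,
        ← Finset.sum_mul, ← Finset.mul_sum, hμ1, one_mul]
    · intro l _ hl
      apply Finset.sum_eq_zero
      rintro ⟨k, e⟩ _
      simp [hA, hl]
    · intro h; exact absurd (Finset.mem_univ j) h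
  -- marginal of η on the second coordinate
  have hγrow : ∀ j : I, ∑ i : I, μ i * P (Sum.inl i) (Sum.inl j) = γ * μ j := by
    intro j
    have := congrFun hqsd j
    simpa [Matrix.vecMul, dotProduct, Matrix.submatrix_apply] using this
  have hexit : ∑ i : I, ∑ δ : E, μ i * P (Sum.inl i) (Sum.inr δ) = 1 - γ := by
    have hrow : ∀ i : I, ∑ δ : E, P (Sum.inl i) (Sum.inr δ)
        = 1 - ∑ k : I, P (Sum.inl i) (Sum.inl k) := by
      intro i
      have h := hP1 (Sum.inl i)
      rw [Fintype.sum_sum_type] at h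
      linarith
    have : ∑ i : I, ∑ δ : E, μ i * P (Sum.inl i) (Sum.inr δ)
        = ∑ i : I, (μ i - ∑ k : I, μ i * P (Sum.inl i) (Sum.inl k)) := by
      refine Finset.sum_congr rfl fun i _ => ?_
      rw [← Finset.mul_sum, hrow i, ← Finset.mul_sum]; ring
    rw [this, Finset.sum_sub_distrib, hμ1, ← hγdef]
  -- rewrite LHS using key
  have lhs_eq : (∑ x : I × I × Option E, η x * ∑ y : I × I × Option E, negMulLog (A x y))
      = ∑ j : I, μ j * S j := by
    rw [Fintype.sum_prod_type]
    have step : ∀ i : I, (∑ p : I × Option E, η (i, p) * ∑ y, negMulLog (A (i, p) y))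
        = ∑ j : I, (μ i * P (Sum.inl i) (Sum.inl j)
            + (∑ δ : E, μ i * P (Sum.inl i) (Sum.inr δ)) * μ j) * S j := by
      intro i
      rw [Fintype.sum_prod_type]
      refine Finset.sum_congr rfl fun j _ => ?_
      rw [Fintype.sum_option]
      simp only [key, hη]
      rw [← Finset.sum_mul, ← Finset.sum_mul]
      ring_nf
    rw [Finset.sum_congr rfl fun i _ => step i, Finset.sum_comm]
    refine Finset.sum_congr rfl fun j _ => ?_
    have : ∑ i : I, (μ i * P (Sum.inl i) (Sum.inl j)
        + (∑ δ : E, μ i * P (Sum.inl i) (Sum.inr δ)) * μ j) * S j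
        = ((∑ i : I, μ i * P (Sum.inl i) (Sum.inl j))
          + (∑ i : I, ∑ δ : E, μ i * P (Sum.inl i) (Sum.inr δ)) * μ j) * S j := by
      rw [← Finset.sum_mul, Finset.sum_add_distrib, ← Finset.sum_mul]
    rw [this, hγrow j, hexit]
    ring
  rw [lhs_eq]
  -- expand S and conclude
  have : ∑ j : I, μ j * S j
      = (∑ j : I, ∑ k : I, μ j * negMulLog (P (Sum.inl j) (Sum.inl k)))
        + (∑ j : I, ∑ ε : E, μ j * negMulLog (P (Sum.inl j) (Sum.inr ε)))
        + (∑ j : I, μ j * ∑ ε : E, P (Sum.inl j) (Sum.inr ε)) * Hμ := by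
    have perj : ∀ j : I, μ j * S j
        = (∑ k : I, μ j * negMulLog (P (Sum.inl j) (Sum.inl k)))
          + (∑ ε : E, μ j * negMulLog (P (Sum.inl j) (Sum.inr ε)))
          + (μ j * ∑ ε : E, P (Sum.inl j) (Sum.inr ε)) * Hμ := by
      intro j
      simp only [hS, mul_add, Finset.mul_sum, mul_assoc, add_assoc]
      congr 2
      rw [← Finset.mul_sum, mul_assoc]
    rw [Finset.sum_congr rfl fun j _ => perj j, Finset.sum_add_distrib,
      Finset.sum_add_distrib, ← Finset.sum_mul]
  rw [this]
  have h2 : ∑ j : I, μ j * ∑ ε : E, P (Sum.inl j) (Sum.inr ε) = 1 - γ := by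
    rw [← hexit]
    exact Finset.sum_congr rfl fun j _ => Finset.mul_sum _ _ _
  rw [h2]
  ring
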